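/- Let Q = {1,…,p} and for each q let f_q : ℝⁿ → ℝ be convex with A := ⋂_{q} argmin f_q ≠ ∅. Then every a ∈ A is Lyapunov stable for the switched subgradient inclusion ẋ ∈ −∂f_{σ(t)}(x), for every switching signal σ: namely, for every solution φ and every a ∈ A, t ↦ ‖φ(t) − a‖ is nonincreasing, hence ‖φ(t) − a‖ ≤ ‖φ(0) − a‖ for all t. -/

import Mathlib

open Set MeasureTheory Filter
open scoped RealInnerProductSpace

section Aux

variable {E : Type*} [NormedAddCommGroup E] [InnerProductSpace ℝ E] [CompleteSpace E]
  [SecondCountableTopology E]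

lemma aux_integrable_h {g : ℝ → E} {s t : ℝ}
    (hg : IntegrableOn g (Ioc s t)) :
    Integrable (fun u => ⟪g u, ∫ v in Ioc s u, g v⟫) (volume.restrict (Ioc s t)) := by
  have hIcc : IntegrableOn g (Icc s t) := by
    rwa [integrableOn_Icc_iff_integrableOn_Ioc]
  have hGcont : ContinuousOn (fun u => ∫ v in Ioc s u, g v) (Icc s t) :=
    intervalIntegral.continuousOn_primitive hIcc
  obtain ⟨C, hC⟩ := isCompact_Icc.exists_bound_of_continuousOn hGcont
  have hgm : AEStronglyMeasurable g (volume.restrict (Ioc s t)) := hg.aestronglyMeasurable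
  have hGm : AEStronglyMeasurable (fun u => ∫ v in Ioc s u, g v)
      (volume.restrict (Ioc s t)) :=
    (hGcont.mono Ioc_subset_Icc_self).aestronglyMeasurable measurableSet_Ioc
  refine Integrable.mono' (hg.norm.mul_const C) (hgm.inner hGm) ?_
  filter_upwards [ae_restrict_mem measurableSet_Ioc] with u hu
  calc ‖⟪g u, ∫ v in Ioc s u, g v⟫‖ ≤ ‖g u‖ * ‖∫ v in Ioc s u, g v‖ := norm_inner_le_norm _ _
    _ ≤ ‖g u‖ * C := by
        have := hC u (Ioc_subset_Icc_self hu)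
        exact mul_le_mul_of_nonneg_left (this) (norm_nonneg _)

lemma aux_fubini {g : ℝ → E} {s t : ℝ} (hst : s ≤ t)
    (hg : IntegrableOn g (Ioc s t)) :
    2 * ∫ u in Ioc s t, ⟪g u, ∫ v in Ioc s u, g v⟫ = ‖∫ u in Ioc s t, g u‖ ^ 2 := by
  set S := Ioc s t with hS
  set μ := volume.restrict S with hμ
  set Δ := ∫ u in S, g u with hΔ
  have hgm : AEStronglyMeasurable g μ := hg.aestronglyMeasurable
  set F : ℝ × ℝ → ℝ := Set.indicator {q : ℝ × ℝ | q.1 < q.2}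
      (fun q => ⟪g q.1, g q.2⟫) with hF
  have hTm : MeasurableSet {q : ℝ × ℝ | q.1 < q.2} :=
    measurableSet_lt measurable_fst measurable_snd
  have hFm : AEStronglyMeasurable F (μ.prod μ) :=
    ((hgm.comp_fst).inner (hgm.comp_snd)).indicator hTm
  have hFint : Integrable F (μ.prod μ) := by
    refine Integrable.mono' (hg.norm.mul_prod hg.norm) hFm ?_
    refine Eventually.of_forall fun p => ?_
    rw [hF]
    by_cases hp : p ∈ {q : ℝ × ℝ | q.1 < q.2}
    · rw [Set.indicator_of_mem hp]
      exact (norm_inner_le_norm _ _)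
    · rw [Set.indicator_of_notMem hp]
      simp [mul_nonneg (norm_nonneg _) (norm_nonneg _)]
  have swap : ∫ u, ∫ v, F (u, v) ∂μ ∂μ = ∫ v, ∫ u, F (u, v) ∂μ ∂μ :=
    integral_integral_swap hFint
  -- LHS : ∫ u in S, ⟪g u, ∫ v in Ioc u t, g v⟫
  have hL : ∫ u, ∫ v, F (u, v) ∂μ ∂μ = ∫ u in S, ⟪g u, ∫ v in Ioc u t, g v⟫ := by
    refine setIntegral_congr_fun measurableSet_Ioc fun u hu => ?_
    have h1 : (fun v => F (u, v)) = Set.indicator (Ioi u) (fun v => ⟪g u, g v⟫) := by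
      ext v
      by_cases h : u < v <;> simp [hF, Set.indicator, h, Set.mem_Ioi]
    rw [h1, hμ, integral_indicator measurableSet_Ioi, Measure.restrict_restrict measurableSet_Ioi]
    have h2 : Ioi u ∩ S = Ioc u t := by
      rw [hS]
      ext v
      simp only [mem_inter_iff, mem_Ioi, mem_Ioc]
      constructor
      · rintro ⟨h3, _, h5⟩; exact ⟨h3, h5⟩
      · rintro ⟨h3, h4⟩; exact ⟨h3, hu.1.trans h3, h4⟩
    rw [h2, integral_inner (hg.mono_set (Ioc_subset_Ioc_left hu.1.le))]
  -- RHS : ∫ v in S, ⟪g v, ∫ u in Ioc s v, g u⟫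
  have hR : ∫ v, ∫ u, F (u, v) ∂μ ∂μ = ∫ v in S, ⟪g v, ∫ u in Ioc s v, g u⟫ := by
    refine setIntegral_congr_fun measurableSet_Ioc fun v hv => ?_
    have h1 : (fun u => F (u, v)) = Set.indicator (Iio v) (fun u => ⟪g v, g u⟫) := by
      ext u
      by_cases h : u < v <;> simp [hF, Set.indicator, h, Set.mem_Iio, real_inner_comm]
    rw [h1, hμ, integral_indicator measurableSet_Iio, Measure.restrict_restrict measurableSet_Iio]
    have h2 : Iio v ∩ S = Ioo s v := by
      rw [hS]
      ext u
      simp only [mem_inter_iff, mem_Iio, mem_Ioc, mem_Ioo]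
      constructor
      · rintro ⟨h3, h4, _⟩; exact ⟨h4, h3⟩
      · rintro ⟨h3, h4⟩; exact ⟨h4, h3, h4.le.trans hv.2⟩
    rw [h2, integral_inner (hg.mono_set (Ioo_subset_Ioc_self.trans (Ioc_subset_Ioc_right hv.2))),
      ← integral_Ioc_eq_integral_Ioo]
  -- split identity
  have hsplit : ∀ u ∈ S, (∫ v in Ioc s u, g v) + ∫ v in Ioc u t, g v = Δ := by
    intro u hu
    rw [hΔ, hS, ← Ioc_union_Ioc_eq_Ioc hu.1.le hu.2]
    exact (setIntegral_union (Ioc_disjoint_Ioc_of_le le_rfl) measurableSet_Ioc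
      (hg.mono_set (Ioc_subset_Ioc_right hu.2))
      (hg.mono_set (Ioc_subset_Ioc_left hu.1.le))).symm
  have hh : Integrable (fun u => ⟪g u, ∫ v in Ioc s u, g v⟫) μ := aux_integrable_h hg
  have key : ∫ u in S, ⟪g u, ∫ v in Ioc u t, g v⟫
      = ‖Δ‖ ^ 2 - ∫ u in S, ⟪g u, ∫ v in Ioc s u, g v⟫ := by
    have h1 : ∫ u in S, ⟪g u, ∫ v in Ioc u t, g v⟫
        = ∫ u in S, (⟪g u, Δ⟫ - ⟪g u, ∫ v in Ioc s u, g v⟫) := by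
      refine setIntegral_congr_fun measurableSet_Ioc fun u hu => ?_
      rw [← hsplit u hu, inner_add_right]
      ring
    rw [h1, integral_sub (hg.inner_const Δ) hh]
    congr 1
    have : ∀ u, ⟪g u, Δ⟫ = ⟪Δ, g u⟫ := fun u => real_inner_comm _ _
    simp_rw [this]
    rw [integral_inner hg, ← hΔ, real_inner_self_eq_norm_sq]
  rw [hL, hR] at swap
  rw [swap] at key
  linarith [key]

end Aux

/-- Convex subdifferential of a real-valued function. -/
def subdiff {n : ℕ} (f : EuclideanSpace ℝ (Fin n) → ℝ) (x : EuclideanSpace ℝ (Fin n)) :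
    Set (EuclideanSpace ℝ (Fin n)) :=
  {y | ∀ x', f x + ⟪y, x' - x⟫ ≤ f x'}

theorem stmt19 {n p : ℕ}
    (f : Fin p → EuclideanSpace ℝ (Fin n) → ℝ)
    (hf : ∀ q, ConvexOn ℝ univ (f q))
    (a : EuclideanSpace ℝ (Fin n))
    -- a ∈ A = ⋂_q argmin f_q
    (ha : ∀ q, IsMinOn (f q) univ a)
    (σ : ℝ → Fin p)
    -- σ is a piecewise-constant switching signal
    (hσ : ∃ τ : ℕ → ℝ, τ 0 = 0 ∧ StrictMono τ ∧ Tendsto τ atTop atTop ∧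
          ∀ j : ℕ, ∀ s ∈ Ico (τ j) (τ (j+1)), σ s = σ (τ j))
    (φ φ' : ℝ → EuclideanSpace ℝ (Fin n))
    -- φ locally absolutely continuous with a.e. derivative φ'
    (hφint : ∀ T : ℝ, IntervalIntegrable φ' volume 0 T)
    (hφFTC : ∀ t ∈ Ici (0:ℝ), φ t = φ 0 + ∫ s in (0:ℝ)..t, φ' s)
    -- φ'(t) ∈ -∂f_{σ(t)}(φ(t)) a.e.
    (hincl : ∀ᵐ t ∂volume, t ∈ Ici (0:ℝ) → -φ' t ∈ subdiff (f (σ t)) (φ t)) :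
    AntitoneOn (fun t => ‖φ t - a‖) (Ici 0) ∧
    ∀ t ∈ Ici (0:ℝ), ‖φ t - a‖ ≤ ‖φ 0 - a‖ := by
  have key : ∀ s t : ℝ, 0 ≤ s → s ≤ t → ‖φ t - a‖ ≤ ‖φ s - a‖ := by
    intro s t hs hst
    set g := φ' with hgdef
    have hgS : IntegrableOn g (Ioc s t) := by
      have h := (hφint s).symm.trans (hφint t)
      exact (intervalIntegrable_iff_integrableOn_Ioc_of_le hst).mp h
    set Δ := ∫ u in Ioc s t, g u with hΔ
    -- difference of φ as set integrals
    have hdiff : ∀ u : ℝ, s ≤ u → φ u - φ s = ∫ v in Ioc s u, g v := by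
      intro u hsu
      rw [hφFTC u (hs.trans hsu), hφFTC s hs, add_sub_add_left_eq_sub,
        intervalIntegral.integral_interval_sub_left (hφint u) (hφint s),
        intervalIntegral.integral_of_le hsu]
    have hG : ∀ u ∈ Ioc s t, φ u - a = (φ s - a) + ∫ v in Ioc s u, g v := by
      intro u hu
      rw [← hdiff u hu.1.le]
      abel
    -- a.e. pointwise inequality
    have hae : ∀ᵐ u ∂(volume.restrict (Ioc s t)),
        ⟪g u, φ s - a⟫ + ⟪g u, ∫ v in Ioc s u, g v⟫ ≤ 0 := by
      filter_upwards [ae_restrict_mem measurableSet_Ioc, ae_restrict_of_ae hincl] with u hu hiu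
      have hu0 : u ∈ Ici (0:ℝ) := le_of_lt (lt_of_le_of_lt hs hu.1)
      have hsub := hiu hu0 a
      have hmin : f (σ u) a ≤ f (σ u) (φ u) := (isMinOn_iff.mp (ha (σ u))) (φ u) (mem_univ _)
      have h1 : ⟪-g u, a - φ u⟫ ≤ 0 := by linarith
      have h2 : ⟪g u, φ u - a⟫ ≤ 0 := by
        rw [← neg_sub a (φ u), inner_neg_right]
        rw [inner_neg_left] at h1
        linarith
      rw [hG u hu, inner_add_right] at h2
      exact h2
    have hint1 : Integrable (fun u => ⟪g u, φ s - a⟫) (volume.restrict (Ioc s t)) :=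
      hgS.inner_const _
    have hint2 : Integrable (fun u => ⟪g u, ∫ v in Ioc s u, g v⟫)
        (volume.restrict (Ioc s t)) := aux_integrable_h hgS
    have hIle : (∫ u in Ioc s t, (⟪g u, φ s - a⟫ + ⟪g u, ∫ v in Ioc s u, g v⟫)) ≤ 0 :=
      integral_nonpos_of_ae hae
    rw [integral_add hint1 hint2] at hIle
    have e1 : ∫ u in Ioc s t, ⟪g u, φ s - a⟫ = ⟪Δ, φ s - a⟫ := by
      have hc : (fun u => ⟪g u, φ s - a⟫) = fun u => ⟪φ s - a, g u⟫ :=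
        funext fun u => real_inner_comm _ _
      rw [hc, integral_inner hgS, real_inner_comm]
    have e2 : 2 * ∫ u in Ioc s t, ⟪g u, ∫ v in Ioc s u, g v⟫ = ‖Δ‖ ^ 2 :=
      aux_fubini hst hgS
    have hnormsq : ‖φ t - a‖ ^ 2 ≤ ‖φ s - a‖ ^ 2 := by
      have hta : φ t - a = (φ s - a) + Δ := by
        rw [hΔ, ← hdiff t hst]
        abel
      rw [hta, norm_add_sq_real]
      have hcomm : ⟪φ s - a, Δ⟫ = ⟪Δ, φ s - a⟫ := real_inner_comm _ _
      rw [e1] at hIle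
      linarith
    calc ‖φ t - a‖ = Real.sqrt (‖φ t - a‖ ^ 2) := (Real.sqrt_sq (norm_nonneg _)).symm
      _ ≤ Real.sqrt (‖φ s - a‖ ^ 2) := Real.sqrt_le_sqrt hnormsq
      _ = ‖φ s - a‖ := Real.sqrt_sq (norm_nonneg _)
  exact ⟨fun s hs t ht hst => key s t hs hst, fun t ht => key 0 t le_rfl ht⟩
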